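/- For all nonnegative integers m \ge 1 and commutative-ring elements X, Y with X \ne Y (or working formally), (X^m - Y^m)/(X - Y) = \sum_{0 \le k \le (m-1)/2} (-1)^k * binom(m-1-k, k) * (XY)^k * (X+Y)^{m-1-2k}. -/

import Mathlib

section aux

variable {R : Type*} [CommRing R]

private def gwTrm (X Y : R) (n k : ℕ) : R :=
  (-1 : R) ^ k * (Nat.choose (n - k) k : R) * (X * Y) ^ k * (X + Y) ^ (n - 2 * k)

private lemma gwTrm_zero (X Y : R) {n k : ℕ} (h : n < 2 * k) : gwTrm X Y n k = 0 := by
  simp [gwTrm, Nat.choose_eq_zero_of_lt (show n - k < k by omega)]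

private lemma gwKey (X Y : R) (n k : ℕ) :
    gwTrm X Y (n + 2) (k + 1) = (X + Y) * gwTrm X Y (n + 1) (k + 1) - X * Y * gwTrm X Y n k := by
  rcases lt_or_ge n (2 * k) with h | h
  · rw [gwTrm_zero X Y (show n + 2 < 2 * (k + 1) by omega),
      gwTrm_zero X Y (show n + 1 < 2 * (k + 1) by omega), gwTrm_zero X Y h]
    ring
  · rcases Nat.eq_or_lt_of_le h with h' | h'
    · subst h'
      rw [gwTrm_zero X Y (show 2 * k + 1 < 2 * (k + 1) by omega)]
      simp only [gwTrm, show 2 * k + 2 - (k + 1) = k + 1 by omega,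
        show 2 * k + 2 - 2 * (k + 1) = 0 by omega, show 2 * k - k = k by omega,
        show 2 * k - 2 * k = 0 by omega, Nat.choose_self]
      push_cast
      ring
    · obtain ⟨a, rfl⟩ : ∃ a, n = 2 * k + 1 + a := ⟨n - (2 * k + 1), by omega⟩
      simp only [gwTrm, show 2 * k + 1 + a + 2 - (k + 1) = (k + 1 + a) + 1 by omega,
        show 2 * k + 1 + a + 2 - 2 * (k + 1) = a + 1 by omega,
        show 2 * k + 1 + a + 1 - (k + 1) = k + 1 + a by omega,
        show 2 * k + 1 + a + 1 - 2 * (k + 1) = a by omega,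
        show 2 * k + 1 + a - k = k + 1 + a by omega,
        show 2 * k + 1 + a - 2 * k = a + 1 by omega]
      rw [Nat.choose_succ_succ' (k + 1 + a) k]
      push_cast
      ring

private def gwSum (X Y : R) (n : ℕ) : R := ∑ k ∈ Finset.range (n / 2 + 1), gwTrm X Y n k

private lemma gwSum_ext (X Y : R) (n N : ℕ) (hN : n / 2 + 1 ≤ N) :
    ∑ k ∈ Finset.range N, gwTrm X Y n k = gwSum X Y n := by
  rw [gwSum]
  refine (Finset.sum_subset (by intro x hx; simp_all; omega) ?_).symm
  intro x _ hx
  simp only [Finset.mem_range, not_lt] at hx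
  exact gwTrm_zero X Y (by omega)

private lemma gwSum_rec (X Y : R) (n : ℕ) :
    gwSum X Y (n + 2) = (X + Y) * gwSum X Y (n + 1) - X * Y * gwSum X Y n := by
  have h1 : gwSum X Y (n + 2) = ∑ k ∈ Finset.range (n / 2 + 1 + 1), gwTrm X Y (n + 2) k :=
    (gwSum_ext X Y (n + 2) _ (by omega)).symm
  have h0 : gwTrm X Y (n + 2) 0 = (X + Y) * gwTrm X Y (n + 1) 0 := by
    simp only [gwTrm, Nat.sub_zero, Nat.mul_zero, pow_zero, pow_succ, Nat.choose_zero_right]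
    push_cast; ring
  have h2 : ∑ k ∈ Finset.range (n / 2 + 1), gwTrm X Y (n + 1) (k + 1)
      = gwSum X Y (n + 1) - gwTrm X Y (n + 1) 0 := by
    have h := gwSum_ext X Y (n + 1) (n / 2 + 1 + 1) (by omega)
    rw [Finset.sum_range_succ'] at h
    linear_combination h
  have h4 : ∑ k ∈ Finset.range (n / 2 + 1), gwTrm X Y n k = gwSum X Y n :=
    gwSum_ext X Y n _ le_rfl
  rw [h1, Finset.sum_range_succ']
  simp only [gwKey]
  rw [Finset.sum_sub_distrib, ← Finset.mul_sum, ← Finset.mul_sum, h2, h4, h0]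
  ring

private lemma gwMain (X Y : R) : ∀ n : ℕ, X ^ (n + 1) - Y ^ (n + 1) = (X - Y) * gwSum X Y n := by
  intro n
  induction n using Nat.twoStepInduction with
  | zero => simp [gwSum, gwTrm]
  | one => simp [gwSum, gwTrm, Finset.sum_range_succ]; ring
  | more n ih1 ih2 =>
    rw [gwSum_rec]
    have : X ^ (n + 2 + 1) - Y ^ (n + 2 + 1)
        = (X + Y) * (X ^ (n + 1 + 1) - Y ^ (n + 1 + 1)) - X * Y * (X ^ (n + 1) - Y ^ (n + 1)) := by
      ring
    rw [this, ih2, ih1]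
    ring

end aux

/-- Second Girard–Waring formula, stated without division: for `m ≥ 1` in any commutative ring,
`X^m - Y^m = (X - Y) * ∑_{0 ≤ k ≤ (m-1)/2} (-1)^k * C(m-1-k,k) * (XY)^k * (X+Y)^{m-1-2k}`. -/
theorem girard_waring_diff {R : Type*} [CommRing R] (m : ℕ) (hm : 1 ≤ m) (X Y : R) :
    X ^ m - Y ^ m =
      (X - Y) *
        ∑ k ∈ Finset.range ((m - 1) / 2 + 1),
          (-1 : R) ^ k * (Nat.choose (m - 1 - k) k : R) * (X * Y) ^ k *
            (X + Y) ^ (m - 1 - 2 * k) := by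
  obtain ⟨n, rfl⟩ : ∃ n, m = n + 1 := ⟨m - 1, by omega⟩
  simpa only [Nat.add_sub_cancel, gwSum, gwTrm] using gwMain X Y n
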